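/- Let A be a C*-algebra, let ι : A → M(A) denote the canonical embedding of A into its multiplier algebra (sending x to the double centralizer given by left and right multiplication by x), and let J be a two-sided ideal of M(A). Then every element of J lies in the strict closure of J ∩ ι(A): for every m = (L, R) ∈ J, every ε > 0 and every finite set F ⊆ A there exists x ∈ A with ι(x) ∈ J such that ‖L(a) − x·a‖ < ε and ‖R(a) − a·x‖ < ε for all a ∈ F. -/

import Mathlib

open scoped MultiplierAlgebra

section AuxOrder

open scoped CStarAlgebra

variable {A : Type*} [NonUnitalCStarAlgebra A]

/-- Pullback of the spectral order on the unitization. -/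
noncomputable def auxPO : PartialOrder A :=
  letI := CStarAlgebra.spectralOrder A⁺¹
  PartialOrder.lift (fun a : A => (a : A⁺¹)) Unitization.inr_injective

lemma auxSOR :
    letI := auxPO (A := A)
    StarOrderedRing A := by
  letI := CStarAlgebra.spectralOrder A⁺¹
  haveI := CStarAlgebra.spectralOrderedRing A⁺¹
  letI := auxPO (A := A)
  have hle : ∀ x y : A, x ≤ y ↔ (x : A⁺¹) ≤ (y : A⁺¹) := fun _ _ => Iff.rfl
  refine StarOrderedRing.of_nonneg_iff' (fun {x y} h z => ?_) (fun x => ?_)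
  · rw [hle] at h ⊢
    rw [Unitization.inr_add, Unitization.inr_add]
    exact add_le_add le_rfl h
  constructor
  · intro hx
    have hx' : (0 : A⁺¹) ≤ (x : A⁺¹) := by
      rw [hle] at hx; rwa [Unitization.inr_zero] at hx
    have hsa : IsSelfAdjoint x :=
      (Unitization.isSelfAdjoint_inr (R := ℂ)).mp (.of_nonneg hx')
    have hspec : ∀ t ∈ quasispectrum ℝ x, 0 ≤ t := by
      rw [Unitization.quasispectrum_eq_spectrum_inr' ℝ ℂ]
      exact fun t ht => spectrum_nonneg_of_nonneg hx' ht
    refine ⟨cfcₙ Real.sqrt x, ?_⟩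
    have hs : IsSelfAdjoint (cfcₙ Real.sqrt x) := cfcₙ_predicate _ x
    rw [hs.star_eq, ← cfcₙ_mul _ _ x]
    conv_lhs => rw [← cfcₙ_id ℝ x]
    exact cfcₙ_congr fun t ht => (Real.mul_self_sqrt (hspec t ht)).symm
  · rintro ⟨s, rfl⟩
    rw [hle, Unitization.inr_zero, Unitization.inr_mul, Unitization.inr_star]
    exact star_mul_self_nonneg _
end AuxOrder

section AuxMult

variable {A : Type*} [NonUnitalCStarAlgebra A]

lemma aux_fst_mul (m : 𝓜(ℂ, A)) (u a : A) : m.fst (u * a) = m.fst u * a := by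
  have h : ∀ c : A, c * (m.fst (u * a) - m.fst u * a) = 0 := by
    intro c
    rw [mul_sub, sub_eq_zero]
    calc c * m.fst (u * a) = m.snd c * (u * a) := (m.central c (u * a)).symm
      _ = (m.snd c * u) * a := (mul_assoc _ _ _).symm
      _ = (c * m.fst u) * a := by rw [m.central]
      _ = c * (m.fst u * a) := mul_assoc _ _ _
  have := h (star (m.fst (u * a) - m.fst u * a))
  rwa [CStarRing.star_mul_self_eq_zero_iff, sub_eq_zero] at this

lemma aux_coe_eq (m : 𝓜(ℂ, A)) (u : A) :
    ((m.fst u : A) : 𝓜(ℂ, A)) = m * (u : 𝓜(ℂ, A)) := by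
  refine DoubleCentralizer.ext ℂ A _ _ (Prod.ext ?_ ?_) <;> ext a
  · show (ContinuousLinearMap.mul ℂ A (m.fst u)) a = (m * (u : 𝓜(ℂ, A))).fst a
    rw [DoubleCentralizer.mul_fst]
    simp only [ContinuousLinearMap.mul_apply', ContinuousLinearMap.mul_apply,
      DoubleCentralizer.coe_fst]
    exact (aux_fst_mul m u a).symm
  · show ((ContinuousLinearMap.mul ℂ A).flip (m.fst u)) a = (m * (u : 𝓜(ℂ, A))).snd a
    rw [DoubleCentralizer.mul_snd]
    simp only [ContinuousLinearMap.flip_apply, ContinuousLinearMap.mul_apply',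
      ContinuousLinearMap.mul_apply, DoubleCentralizer.coe_snd]
    exact (m.central a u).symm

end AuxMult

/-- For a C*-algebra `A`, every element of a two-sided ideal `J` of the multiplier algebra
`M(A)` lies in the strict closure of `J ∩ A`: given `m ∈ J`, `ε > 0` and a finite set
`F ⊆ A`, there is `x ∈ A` whose canonical image lies in `J` with
`‖m·a − x·a‖ < ε` and `‖a·m − a·x‖ < ε` for all `a ∈ F`. -/
theorem stmt7 {A : Type*} [NonUnitalCStarAlgebra A]
    (J : TwoSidedIdeal 𝓜(ℂ, A)) :
    ∀ m ∈ J, ∀ ε : ℝ, 0 < ε → ∀ F : Finset A,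
      ∃ x : A, (x : 𝓜(ℂ, A)) ∈ J ∧
        ∀ a ∈ F, ‖m.fst a - x * a‖ < ε ∧ ‖m.snd a - a * x‖ < ε := by
  letI := auxPO (A := A)
  haveI : StarOrderedRing A := auxSOR
  intro m hm ε hε F
  have hau := CStarAlgebra.increasingApproximateUnit (A := A)
  haveI : (CStarAlgebra.approximateUnit A).NeBot := hau.toIsApproximateUnit.neBot
  set δ := ε / (‖m.fst‖ + 1) with hδ_def
  have hδ : 0 < δ := div_pos hε (by positivity)
  have h1 : ∀ᶠ u in CStarAlgebra.approximateUnit A, ∀ a ∈ F,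
      ‖a - u * a‖ < δ ∧ ‖m.snd a - m.snd a * u‖ < ε := by
    rw [Filter.eventually_all_finset]
    intro a _
    have t1 := (Metric.tendsto_nhds.mp (hau.tendsto_mul_right a)) δ hδ
    have t2 := (Metric.tendsto_nhds.mp (hau.tendsto_mul_left (m.snd a))) ε hε
    filter_upwards [t1, t2] with u hu1 hu2
    rw [dist_eq_norm, norm_sub_rev] at hu1 hu2
    exact ⟨hu1, hu2⟩
  obtain ⟨u, hu⟩ := h1.exists
  refine ⟨m.fst u, ?_, fun a ha => ?_⟩
  · rw [aux_coe_eq]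
    exact J.mul_mem_right _ _ hm
  obtain ⟨hu1, hu2⟩ := hu a ha
  constructor
  · have key : m.fst a - m.fst u * a = m.fst (a - u * a) := by
      rw [map_sub, aux_fst_mul]
    rw [key]
    calc ‖m.fst (a - u * a)‖ ≤ ‖m.fst‖ * ‖a - u * a‖ := m.fst.le_opNorm _
      _ < (‖m.fst‖ + 1) * δ := by
          have h0 : (0 : ℝ) ≤ ‖m.fst‖ := norm_nonneg _
          nlinarith [norm_nonneg (a - u * a)]
      _ = ε := by
          rw [hδ_def]
          field_simp
  · have : a * m.fst u = m.snd a * u := (m.central a u).symm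
    rw [this]
    exact hu2
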